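/- For every positive integer t, the sum of squared coefficients satisfies ∑_{i=1}^{t} (α^i_t)^2 ≤ 2H/t. -/

import Mathlib

/-- Learning rate `α_t = (H+1)/(H+t)`. -/
noncomputable def lr (H t : ℕ) : ℝ := (H + 1) / (H + t)

/-- The coefficient `α^i_t`: for `i = 0` it is `∏_{j=1}^t (1 - α_j)`, and for
`i ≥ 1` it is `α_i · ∏_{j=i+1}^t (1 - α_j)`. -/
noncomputable def alphaC (H i t : ℕ) : ℝ :=
  if i = 0 then ∏ j ∈ Finset.Icc 1 t, (1 - lr H j)
  else lr H i * ∏ j ∈ Finset.Icc (i + 1) t, (1 - lr H j)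

lemma lr_nonneg (H j : ℕ) : 0 ≤ lr H j := by
  unfold lr; positivity

lemma one_sub_lr (H j : ℕ) (hj : 1 ≤ j) : 1 - lr H j = ((j : ℝ) - 1) / (H + j) := by
  have hj' : (1 : ℝ) ≤ (j : ℝ) := by exact_mod_cast hj
  have h0 : (H : ℝ) + j ≠ 0 := by positivity
  rw [eq_div_iff h0, lr, sub_mul, div_mul_cancel₀ _ h0]; ring

lemma one_sub_lr_nonneg (H j : ℕ) (hj : 1 ≤ j) : 0 ≤ 1 - lr H j := by
  rw [one_sub_lr H j hj]
  have hj' : (1 : ℝ) ≤ (j : ℝ) := by exact_mod_cast hj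
  have h0 : (0 : ℝ) < (H : ℝ) + j := by positivity
  exact div_nonneg (by linarith) h0.le

lemma one_sub_lr_le (H j : ℕ) (hj : 1 ≤ j) : 1 - lr H j ≤ ((j : ℝ) - 1) / j := by
  rw [one_sub_lr H j hj]
  have hj' : (1 : ℝ) ≤ (j : ℝ) := by exact_mod_cast hj
  have hHj : (0 : ℝ) < (j : ℝ) := by linarith
  exact div_le_div_of_nonneg_left (by linarith) hHj (by linarith) |>.trans_eq rfl

lemma prod_telescope (i : ℕ) (hi : 1 ≤ i) :
    ∀ t : ℕ, i ≤ t → ∏ j ∈ Finset.Icc (i + 1) t, ((j : ℝ) - 1) / j = (i : ℝ) / t := by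
  intro t
  induction t with
  | zero => intro h; omega
  | succ n ih =>
    intro h
    rcases Nat.lt_or_ge i (n + 1) with hlt | hge
    · have hin : i ≤ n := by omega
      have hn1 : (1 : ℝ) ≤ (n : ℝ) := by exact_mod_cast (hi.trans hin)
      rw [Finset.prod_Icc_succ_top (by omega), ih hin]
      have hn0 : (n : ℝ) ≠ 0 := by linarith
      have hn10 : ((n : ℝ) + 1) ≠ 0 := by linarith
      push_cast
      field_simp
      ring
    · have : i = n + 1 := by omega
      subst this
      rw [Finset.Icc_eq_empty (by omega), Finset.prod_empty]
      have : ((n : ℝ) + 1) ≠ 0 := by positivity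
      push_cast
      rw [div_self this]

lemma alpha_nonneg (H i t : ℕ) (hi : 1 ≤ i) : 0 ≤ alphaC H i t := by
  unfold alphaC
  rw [if_neg (by omega)]
  apply mul_nonneg (lr_nonneg H i)
  apply Finset.prod_nonneg
  intro j hj
  exact one_sub_lr_nonneg H j (by have := (Finset.mem_Icc.mp hj).1; omega)

lemma alpha_le (H i t : ℕ) (hH : 1 ≤ H) (hi : 1 ≤ i) (hit : i ≤ t) :
    alphaC H i t ≤ 2 * H / t := by
  unfold alphaC
  rw [if_neg (by omega)]
  have hprod : ∏ j ∈ Finset.Icc (i + 1) t, (1 - lr H j) ≤ (i : ℝ) / t := by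
    rw [← prod_telescope i hi t hit]
    apply Finset.prod_le_prod
    · intro j hj
      exact one_sub_lr_nonneg H j (by have := (Finset.mem_Icc.mp hj).1; omega)
    · intro j hj
      exact one_sub_lr_le H j (by have := (Finset.mem_Icc.mp hj).1; omega)
  have h1 : lr H i * ∏ j ∈ Finset.Icc (i + 1) t, (1 - lr H j) ≤ lr H i * ((i : ℝ) / t) :=
    mul_le_mul_of_nonneg_left hprod (lr_nonneg H i)
  refine h1.trans ?_
  have hi' : (1 : ℝ) ≤ (i : ℝ) := by exact_mod_cast hi
  have ht' : (1 : ℝ) ≤ (t : ℝ) := by exact_mod_cast (hi.trans hit)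
  have hH' : (1 : ℝ) ≤ (H : ℝ) := by exact_mod_cast hH
  rw [lr]
  rw [div_mul_div_comm]
  rw [div_le_div_iff₀ (by positivity) (by positivity)]
  have key : ((H : ℝ) + 1) * i ≤ 2 * H * ((H : ℝ) + i) := by nlinarith
  nlinarith

lemma alpha_succ (H i t : ℕ) (hi : 1 ≤ i) (hit : i ≤ t) :
    alphaC H i (t + 1) = alphaC H i t * (1 - lr H (t + 1)) := by
  unfold alphaC
  rw [if_neg (by omega), if_neg (by omega),
    Finset.prod_Icc_succ_top (by omega : i + 1 ≤ t + 1)]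
  ring

lemma alpha_self (H i : ℕ) (hi : 1 ≤ i) : alphaC H i i = lr H i := by
  unfold alphaC
  rw [if_neg (by omega), Finset.Icc_eq_empty (by omega), Finset.prod_empty, mul_one]

lemma sum_alpha (H : ℕ) : ∀ t : ℕ, 1 ≤ t → ∑ i ∈ Finset.Icc 1 t, alphaC H i t = 1 := by
  intro t
  induction t with
  | zero => intro h; omega
  | succ n ih =>
    intro _
    rcases Nat.lt_or_ge 0 n with hn | hn
    · have hn1 : 1 ≤ n := hn
      rw [Finset.sum_Icc_succ_top (by omega : 1 ≤ n + 1)]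
      have : ∑ i ∈ Finset.Icc 1 n, alphaC H i (n + 1)
          = ∑ i ∈ Finset.Icc 1 n, alphaC H i n * (1 - lr H (n + 1)) := by
        apply Finset.sum_congr rfl
        intro i hiI
        have h := Finset.mem_Icc.mp hiI
        exact alpha_succ H i n h.1 h.2
      rw [this, ← Finset.sum_mul, ih hn1, one_mul,
        alpha_self H (n + 1) (by omega)]
      ring
    · have : n = 0 := by omega
      subst this
      rw [show Finset.Icc 1 1 = {1} from rfl, Finset.sum_singleton,
        alpha_self H 1 le_rfl, lr]
      push_cast
      rw [div_self (by positivity)]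

theorem stmt_3 (H : ℕ) (hH : 1 ≤ H) (t : ℕ) (ht : 1 ≤ t) :
    ∑ i ∈ Finset.Icc 1 t, (alphaC H i t) ^ 2 ≤ 2 * H / t := by
  have step : ∑ i ∈ Finset.Icc 1 t, (alphaC H i t) ^ 2
      ≤ ∑ i ∈ Finset.Icc 1 t, (2 * (H : ℝ) / t) * alphaC H i t := by
    apply Finset.sum_le_sum
    intro i hiI
    have h := Finset.mem_Icc.mp hiI
    have h1 := alpha_nonneg H i t h.1
    have h2 := alpha_le H i t hH h.1 h.2
    calc (alphaC H i t) ^ 2 = alphaC H i t * alphaC H i t := sq (alphaC H i t) ▸ by ring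
      _ ≤ (2 * H / t) * alphaC H i t := mul_le_mul_of_nonneg_right h2 h1
  refine step.trans ?_
  rw [← Finset.mul_sum, sum_alpha H t ht, mul_one]
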